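/- Any string of length n over an alphabet contains at most n+1 distinct palindromic substrings (including the empty string). -/

import Mathlib

private lemma dropLast_triple {α : Type*} (s P t : List α) (ht : t ≠ []) :
    (s ++ P ++ t).dropLast = s ++ P ++ t.dropLast := by
  rw [List.append_assoc, List.dropLast_append_of_ne_nil (l' := s) (show P ++ t ≠ [] by simp [ht]),
    List.dropLast_append_of_ne_nil (l' := P) ht, List.append_assoc]

/-- The set of palindromic infixes of a list is finite. -/
private lemma pal_finite {α : Type*} (T : List α) :
    {P : List α | P <:+: T ∧ P.reverse = P}.Finite := by
  apply Set.Finite.subset (List.finite_toSet T.sublists)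
  intro P hP
  simpa using (List.mem_sublists.2 hP.1.sublist)

/-- If `P` is an infix of `T ++ [a]` but not of `T`, then `P` is a suffix of `T ++ [a]`. -/
private lemma suffix_of_not_infix {α : Type*} {T P : List α} {a : α}
    (h : P <:+: T ++ [a]) (h' : ¬ P <:+: T) : P <:+ T ++ [a] := by
  obtain ⟨s, t, hst⟩ := h
  rcases eq_or_ne t [] with rfl | ht
  · exact ⟨s, by simpa using hst⟩
  · exfalso
    apply h'
    have hT : T = s ++ P ++ t.dropLast := by
      rw [← dropLast_triple s P t ht, hst, List.dropLast_concat]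
    exact ⟨s, t.dropLast, hT.symm⟩

/-- A proper palindromic suffix `P` of a longer palindromic suffix `L` of `T ++ [a]`
is an infix of `T`. -/
private lemma infix_of_shorter {α : Type*} {T P L : List α} {a : α}
    (hPL : P <:+ L) (hlen : P.length < L.length) (hL : L <:+ T ++ [a])
    (hLpal : L.reverse = L) : P.reverse = P → P <:+: T := by
  intro hPpal
  -- P is a prefix of L
  have hpre : P <+: L := by
    rw [← List.reverse_suffix, hPpal, hLpal]; exact hPL
  obtain ⟨t, ht⟩ := hpre
  obtain ⟨s, hs⟩ := hL
  have htne : t ≠ [] := by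
    rintro rfl
    rw [List.append_nil] at ht
    subst ht
    exact lt_irrefl _ hlen
  have hU : s ++ P ++ t = T ++ [a] := by rw [List.append_assoc, ht, hs]
  have hT : T = s ++ P ++ t.dropLast := by
    rw [← dropLast_triple s P t htne, hU, List.dropLast_concat]
  exact ⟨s, t.dropLast, hT.symm⟩

/-- Any string of length `n` contains at most `n + 1` distinct palindromic
substrings (including the empty string). -/
theorem distinct_palindromic_substrings_le {α : Type*} (T : List α) :
    {P : List α | P <:+: T ∧ P.reverse = P}.ncard ≤ T.length + 1 := by
  induction T using List.reverseRecOn with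
  | nil =>
    have h0 : {P : List α | P <:+: ([] : List α) ∧ P.reverse = P} = {[]} := by
      ext P
      simp only [Set.mem_setOf_eq, List.infix_nil, Set.mem_singleton_iff,
        and_iff_left_iff_imp]
      rintro rfl; rfl
    rw [h0]; simp
  | append_singleton T a ih =>
    set S := {P : List α | P <:+: T ∧ P.reverse = P} with hS
    set U := {P : List α | P <:+: T ++ [a] ∧ P.reverse = P} with hU
    set D := U \ S with hD
    rcases Set.eq_empty_or_nonempty D with hDe | hDne
    · have hsub : U ⊆ S := by
        intro P hP
        by_contra h
        have hmem : P ∈ D := ⟨hP, h⟩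
        rw [hDe] at hmem
        exact hmem
      calc U.ncard ≤ S.ncard := Set.ncard_le_ncard hsub (pal_finite T)
        _ ≤ T.length + 1 := ih
        _ ≤ (T ++ [a]).length + 1 := by simp
    · -- pick a longest element L of D
      have hDfin : D.Finite := (pal_finite (T ++ [a])).subset Set.diff_subset
      obtain ⟨L, hLD, hLmax⟩ := Set.Finite.exists_maximalFor List.length D hDfin hDne
      have key : ∀ P ∈ D, P = L := by
        intro P hPD
        have hPU : P ∈ U := hPD.1
        have hLU : L ∈ U := hLD.1
        have hPsuf : P <:+ T ++ [a] := suffix_of_not_infix hPU.1 (fun h => hPD.2 ⟨h, hPU.2⟩)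
        have hLsuf : L <:+ T ++ [a] := suffix_of_not_infix hLU.1 (fun h => hLD.2 ⟨h, hLU.2⟩)
        rcases List.suffix_or_suffix_of_suffix hPsuf hLsuf with hPL | hLP
        · rcases lt_or_eq_of_le (hPL.sublist.length_le) with hlt | heq
          · exact absurd (infix_of_shorter hPL hlt hLsuf hLU.2 hPU.2)
              (fun h => hPD.2 ⟨h, hPU.2⟩)
          · exact hPL.sublist.eq_of_length heq
        · have : L.length = P.length := le_antisymm hLP.sublist.length_le (hLmax hPD hLP.sublist.length_le)
          exact (hLP.sublist.eq_of_length this).symm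
      have hsub : U ⊆ S ∪ {L} := by
        intro P hP
        by_cases h : P ∈ S
        · exact Or.inl h
        · exact Or.inr (key P ⟨hP, h⟩)
      calc U.ncard ≤ (S ∪ {L}).ncard :=
            Set.ncard_le_ncard hsub ((pal_finite T).union (Set.finite_singleton L))
        _ ≤ S.ncard + ({L} : Set (List α)).ncard := Set.ncard_union_le _ _
        _ ≤ (T.length + 1) + 1 := by
            simpa using Nat.add_le_add_right ih 1
        _ = (T ++ [a]).length + 1 := by simp
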